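/- Define ψ(0)=1, ψ(1) = -2/(d-2), and for 2 ≤ t ≤ d-2 define ψ(t) by the relation C(d-t,2)·ψ(t) + t(d-t)·ψ(t-1) + C(t,2)·ψ(t-2) = 0. Let I, L be subsets of {1,...,n} with |I| = d and |L| = d-2. Then the sum over unordered pairs {u,v} ⊆ I of ψ(|(I \ {u,v}) ∩ L|) equals C(d,2) if I ∩ L = ∅, and equals 0 otherwise. -/

import Mathlib

open Finset

lemma count_lemma (I S : Finset ℕ) (hS : S ⊆ I) (m j : ℕ) (hj : j ≤ m) :
    ((Finset.powersetCard m I).filter (fun p => (p ∩ S).card = j)).card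
      = S.card.choose j * (I \ S).card.choose (m - j) := by
  rw [← Finset.card_powersetCard, ← Finset.card_powersetCard, ← Finset.card_product]
  apply Finset.card_nbij' (fun p => (p ∩ S, p \ S)) (fun q => q.1 ∪ q.2)
  · intro p hp
    simp only [Finset.mem_coe, Finset.mem_filter, Finset.mem_powersetCard] at hp
    obtain ⟨⟨hpI, hpc⟩, hpj⟩ := hp
    simp only [Finset.mem_coe, Finset.mem_product, Finset.mem_powersetCard]
    refine ⟨⟨Finset.inter_subset_right, hpj⟩, ?_, ?_⟩
    · intro x hx
      simp only [Finset.mem_sdiff] at hx ⊢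
      exact ⟨hpI hx.1, hx.2⟩
    · have := Finset.card_inter_add_card_sdiff p S
      omega
  · intro q hq
    simp only [Finset.mem_coe, Finset.mem_product, Finset.mem_powersetCard] at hq
    obtain ⟨⟨h1, h1c⟩, h2, h2c⟩ := hq
    have hdisj : Disjoint q.1 q.2 := by
      rw [Finset.disjoint_left]
      intro a ha hb
      exact ((Finset.mem_sdiff.1 (h2 hb)).2) (h1 ha)
    simp only [Finset.mem_coe, Finset.mem_filter, Finset.mem_powersetCard]
    refine ⟨⟨?_, ?_⟩, ?_⟩
    · exact Finset.union_subset (h1.trans hS) (h2.trans Finset.sdiff_subset)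
    · rw [Finset.card_union_of_disjoint hdisj, h1c, h2c]; omega
    · rw [Finset.union_inter_distrib_right]
      have h0 : q.2 ∩ S = ∅ := by
        apply Finset.eq_empty_of_forall_notMem
        intro a ha
        exact (Finset.mem_sdiff.1 (h2 (Finset.mem_inter.1 ha).1)).2 (Finset.mem_inter.1 ha).2
      rw [h0, Finset.union_empty, Finset.inter_eq_left.2 h1, h1c]
  · intro p hp
    ext x
    simp only [Finset.mem_union, Finset.mem_inter, Finset.mem_sdiff]
    tauto
  · intro q hq
    simp only [Finset.mem_coe, Finset.mem_product, Finset.mem_powersetCard] at hq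
    obtain ⟨⟨h1, h1c⟩, h2, h2c⟩ := hq
    have ha : ∀ x ∈ q.1, x ∈ S := fun x hx => h1 hx
    have hb : ∀ x ∈ q.2, x ∉ S := fun x hx => (Finset.mem_sdiff.1 (h2 hx)).2
    have e1 : (q.1 ∪ q.2) ∩ S = q.1 := by
      ext x
      simp only [Finset.mem_union, Finset.mem_inter]
      constructor
      · rintro ⟨h | h, hs⟩
        · exact h
        · exact absurd hs (hb _ h)
      · intro h; exact ⟨Or.inl h, ha _ h⟩
    have e2 : (q.1 ∪ q.2) \ S = q.2 := by
      ext x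
      simp only [Finset.mem_union, Finset.mem_sdiff]
      constructor
      · rintro ⟨h | h, hs⟩
        · exact absurd (ha _ h) hs
        · exact h
      · intro h; exact ⟨Or.inr h, hb _ h⟩
    exact Prod.ext e1 e2

theorem psi_sum (d n : ℕ) (hd : 2 < d) (ψ : ℕ → ℚ)
    (hψ0 : ψ 0 = 1) (hψ1 : ψ 1 = -2 / ((d : ℚ) - 2))
    (hψrec : ∀ t : ℕ, 2 ≤ t → t ≤ d - 2 →
      ((Nat.choose (d - t) 2 : ℚ)) * ψ t + (t : ℚ) * ((d : ℚ) - (t : ℚ)) * ψ (t - 1) +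
        ((Nat.choose t 2 : ℚ)) * ψ (t - 2) = 0)
    (I L : Finset ℕ) (hI : I ⊆ Finset.Icc 1 n) (hL : L ⊆ Finset.Icc 1 n)
    (hIcard : I.card = d) (hLcard : L.card = d - 2) :
    (∑ p ∈ Finset.powersetCard 2 I, ψ (((I \ p) ∩ L).card)) =
      if Disjoint I L then (Nat.choose d 2 : ℚ) else 0 := by
  set S := I ∩ L with hSdef
  have hSI : S ⊆ I := Finset.inter_subset_left
  set k := S.card with hk
  have hkd : k ≤ d - 2 := by
    rw [hk, ← hLcard]; exact Finset.card_le_card Finset.inter_subset_right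
  have hIS : (I \ S).card = d - k := by rw [Finset.card_sdiff_of_subset hSI, hIcard]
  have hsummand : ∀ p ∈ Finset.powersetCard 2 I,
      ψ (((I \ p) ∩ L).card) = ψ (k - (p ∩ S).card) := by
    intro p hp
    congr 1
    have h1 : (I \ p) ∩ L = S \ p := by
      ext x
      simp only [Finset.mem_inter, Finset.mem_sdiff, hSdef]
      tauto
    rw [h1]
    have h2 := Finset.card_inter_add_card_sdiff S p
    rw [Finset.inter_comm p S]
    omega
  rw [Finset.sum_congr rfl hsummand]
  have hmaps : ∀ p ∈ Finset.powersetCard 2 I, (p ∩ S).card ∈ Finset.range 3 := by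
    intro p hp
    rw [Finset.mem_powersetCard] at hp
    have : (p ∩ S).card ≤ p.card := Finset.card_le_card Finset.inter_subset_left
    rw [Finset.mem_range]; omega
  rw [← Finset.sum_fiberwise_of_maps_to hmaps (fun p => ψ (k - (p ∩ S).card))]
  have hfib : ∀ j ≤ 2, ∑ p ∈ (Finset.powersetCard 2 I).filter (fun p => (p ∩ S).card = j),
      ψ (k - (p ∩ S).card) = ((k.choose j * (d - k).choose (2 - j) : ℕ) : ℚ) * ψ (k - j) := by
    intro j hj
    rw [Finset.sum_congr rfl (fun p hp => by rw [(Finset.mem_filter.1 hp).2]),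
      Finset.sum_const, count_lemma I S hSI 2 j hj, hIS, nsmul_eq_mul]
  rw [Finset.sum_range_succ, Finset.sum_range_succ, Finset.sum_range_one,
    hfib 0 (by norm_num), hfib 1 (by norm_num), hfib 2 (by norm_num)]
  have hdisj_iff : Disjoint I L ↔ k = 0 := by
    rw [Finset.disjoint_iff_inter_eq_empty, ← hSdef, hk, Finset.card_eq_zero]
  have hd2 : ((d : ℚ) - 2) ≠ 0 := by
    have : (2 : ℚ) < d := by exact_mod_cast hd
    linarith
  rcases Nat.lt_or_ge k 2 with hk2 | hk2
  · interval_cases k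
    · rw [if_pos (hdisj_iff.2 rfl)]
      simp [hψ0]
    · rw [if_neg (fun h => absurd (hdisj_iff.1 h) one_ne_zero)]
      have hcast : ((d - 1 : ℕ) : ℚ) = (d : ℚ) - 1 := by
        push_cast [Nat.cast_sub (by omega : 1 ≤ d)]; ring
      rw [hψ0, hψ1]
      norm_num [Nat.choose_one_right]
      rw [Nat.cast_choose_two, hcast]
      field_simp
      ring
  · rw [if_neg (fun h => absurd (hdisj_iff.1 h) (by omega))]
    have hrec := hψrec k hk2 hkd
    have hkd' : k ≤ d := by omega
    have hcast : ((d - k : ℕ) : ℚ) = (d : ℚ) - (k : ℚ) := by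
      push_cast [Nat.cast_sub hkd']; ring
    norm_num [Nat.choose_one_right]
    push_cast [hcast]
    linarith [hrec]
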